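/- arXiv:2005.14318 — 2 statements merged into one kernel-verified Lean document; each statement's English description precedes it below -/
import Mathlib

section
/- For every integer n > 2, the series s_n = Σ_{k=n+1}^∞ 1/((2k-1)√(2k+1)·√(2k-3)) satisfies s_n < 1/(4n-6). -/
/-- For every integer `n > 2`, the series
`s_n = Σ_{k=n+1}^∞ 1/((2k-1)√(2k+1)√(2k-3))` satisfies `s_n < 1/(4n-6)`. -/
theorem tail_series_lt (n : ℕ) (hn : 2 < n) :
    ∑' k : ℕ, 1 / ((2 * ((n : ℝ) + 1 + k) - 1) *
        Real.sqrt (2 * ((n : ℝ) + 1 + k) + 1) * Real.sqrt (2 * ((n : ℝ) + 1 + k) - 3))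
      < 1 / (4 * (n : ℝ) - 6) := by
  have hn3 : (3 : ℝ) ≤ (n : ℝ) := by exact_mod_cast hn
  set f : ℕ → ℝ := fun k => 1 / ((2 * ((n : ℝ) + 1 + k) - 1) *
        Real.sqrt (2 * ((n : ℝ) + 1 + k) + 1) * Real.sqrt (2 * ((n : ℝ) + 1 + k) - 3))
    with hf
  set u : ℕ → ℝ := fun k => 1 / (2 * ((n : ℝ) + k) + 1) with hu
  -- u k = 1/(2n+2k+1); note u 0 = 1/(2n+1)? careful
  -- we want u k = 1/(2(n+1+k)-3) = 1/(2n+2k-1). Adjust: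
  have hx : ∀ k : ℕ, (4 : ℝ) ≤ (n : ℝ) + 1 + k := by
    intro k
    have : (0 : ℝ) ≤ (k : ℝ) := Nat.cast_nonneg k
    linarith
  -- redefine v k = 1/(2n+2k-1)
  set v : ℕ → ℝ := fun k => 1 / (2 * (n : ℝ) + 2 * k - 1) with hv
  have hvpos : ∀ k : ℕ, 0 < 2 * (n : ℝ) + 2 * k - 1 := by
    intro k
    have : (0 : ℝ) ≤ (k : ℝ) := Nat.cast_nonneg k
    linarith
  have hvnonneg : ∀ k : ℕ, 0 ≤ v k := fun k => by
    simpa [hv] using le_of_lt (one_div_pos.mpr (hvpos k))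
  have hfnonneg : ∀ k : ℕ, 0 ≤ f k := by
    intro k
    apply div_nonneg zero_le_one
    have h1 : 0 < 2 * ((n : ℝ) + 1 + k) - 1 := by have := hx k; linarith
    positivity
  -- pointwise bound: f k ≤ (1/2) * (v k - v (k+1))
  have hfg : ∀ k : ℕ, f k ≤ 1 / 2 * (v k - v (k + 1)) := by
    intro k
    set x : ℝ := (n : ℝ) + 1 + k with hxdef
    have h4 : (4 : ℝ) ≤ x := hx k
    have h5 : (0 : ℝ) < 2 * x - 3 := by linarith
    have h1 : (0 : ℝ) < 2 * x - 1 := by linarith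
    have hs3 : Real.sqrt (2 * x - 3) ^ 2 = 2 * x - 3 := Real.sq_sqrt h5.le
    have hsle : Real.sqrt (2 * x - 3) ≤ Real.sqrt (2 * x + 1) :=
      Real.sqrt_le_sqrt (by linarith)
    have hsn : 0 ≤ Real.sqrt (2 * x - 3) := Real.sqrt_nonneg _
    have hden : 2 * x - 3 ≤ Real.sqrt (2 * x + 1) * Real.sqrt (2 * x - 3) := by
      nlinarith [hsle, hsn, hs3]
    have hstep : f k ≤ 1 / ((2 * x - 1) * (2 * x - 3)) := by
      have hpos : 0 < (2 * x - 1) * (2 * x - 3) := mul_pos h1 h5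
      apply one_div_le_one_div_of_le hpos
      calc (2 * x - 1) * (2 * x - 3)
          ≤ (2 * x - 1) * (Real.sqrt (2 * x + 1) * Real.sqrt (2 * x - 3)) := by
            apply mul_le_mul_of_nonneg_left hden h1.le
        _ = (2 * x - 1) * Real.sqrt (2 * x + 1) * Real.sqrt (2 * x - 3) := by ring
    refine hstep.trans_eq ?_
    have e1 : 2 * (n : ℝ) + 2 * k - 1 = 2 * x - 3 := by
      simp [hxdef]; ring
    have e2 : 2 * (n : ℝ) + 2 * (k + 1 : ℕ) - 1 = 2 * x - 1 := by
      push_cast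
      simp [hxdef]; ring
    rw [hv]
    simp only []
    rw [e1, e2]
    field_simp
    ring
  -- partial sums bound
  have hsum : ∀ N : ℕ, ∑ i ∈ Finset.range N, f i ≤ 1 / 2 * v 0 := by
    intro N
    calc ∑ i ∈ Finset.range N, f i
        ≤ ∑ i ∈ Finset.range N, 1 / 2 * (v i - v (i + 1)) :=
          Finset.sum_le_sum fun i _ => hfg i
      _ = 1 / 2 * (v 0 - v N) := by
          rw [← Finset.mul_sum, Finset.sum_range_sub' v]
      _ ≤ 1 / 2 * v 0 := by
          have := hvnonneg N
          linarith
  have htsum : ∑' k : ℕ, f k ≤ 1 / 2 * v 0 :=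
    Real.tsum_le_of_sum_range_le hfnonneg hsum
  have hfinal : 1 / 2 * v 0 < 1 / (4 * (n : ℝ) - 6) := by
    have hv0 : v 0 = 1 / (2 * (n : ℝ) - 1) := by simp [hv]
    rw [hv0]
    rw [div_mul_div_comm, one_mul]
    apply one_div_lt_one_div_of_lt
    · linarith
    · linarith
  exact htsum.trans_lt hfinal
end

section
/- Let P be a bounded self-adjoint operator on a Hilbert space with ‖P‖ < 1 on a closed invariant subspace H₀, and suppose T commutes with P and is an orthogonal projection with range contained in H₀. For f ∈ H₀, let g = (I-P)^{-1}f, g_n = (I-TP)^{-1}Tf, σ² = ⟨f,f⟩ + 2⟨Pf, g⟩ and σ²_n = ⟨Tf,Tf⟩ + 2⟨TPf, g_n⟩. Then |σ² - σ²_n| ≤ 2‖f‖ (1 - ‖P‖)^{-2} ‖f - Tf‖. -/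
open scoped RealInnerProductSpace

set_option maxHeartbeats 1000000 in
/-- Abstract Galerkin error estimate: with `P` self-adjoint of norm at most `ρ < 1`
on a closed invariant subspace `H₀`, `T` an orthogonal projection commuting with `P`
with range in `H₀`, `f ∈ H₀`, `g = (I-P)⁻¹ f`, `g_n = (I-TP)⁻¹ T f`,
`σ² = ⟨f,f⟩ + 2⟨Pf, g⟩` and `σ_n² = ⟨Tf,Tf⟩ + 2⟨TPf, g_n⟩`, one has
`|σ² - σ_n²| ≤ 2‖f‖ (1-ρ)⁻² ‖f - Tf‖`. -/
theorem galerkin_error_estimate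
    {H : Type*} [NormedAddCommGroup H] [InnerProductSpace ℝ H] [CompleteSpace H]
    (P : H →L[ℝ] H) (hPsa : IsSelfAdjoint P)
    (H₀ : Submodule ℝ H) (hclosed : IsClosed (H₀ : Set H))
    (hinv : ∀ x ∈ H₀, P x ∈ H₀)
    (ρ : ℝ) (hρ0 : 0 ≤ ρ) (hρ1 : ρ < 1)
    (hcontr : ∀ x ∈ H₀, ‖P x‖ ≤ ρ * ‖x‖)
    (T : H →L[ℝ] H) (hT : IsIdempotentElem T) (hTsa : IsSelfAdjoint T)
    (hcomm : T ∘L P = P ∘L T) (hrange : ∀ x, T x ∈ H₀)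
    (f : H) (hf : f ∈ H₀)
    (g : H) (hg : g ∈ H₀) (hgeq : g - P g = f)
    (gn : H) (hgn : gn ∈ H₀) (hgneq : gn - T (P gn) = T f) :
    |(⟪f, f⟫ + 2 * ⟪P f, g⟫) - (⟪T f, T f⟫ + 2 * ⟪T (P f), gn⟫)|
      ≤ 2 * ‖f‖ * (1 - ρ)⁻¹ ^ 2 * ‖f - T f‖ := by
  have hρ' : (0:ℝ) < 1 - ρ := by linarith
  have hcinv : (0:ℝ) < (1 - ρ)⁻¹ := inv_pos.mpr hρ'
  have hmul : (1 - ρ) * (1 - ρ)⁻¹ = 1 := mul_inv_cancel₀ (ne_of_gt hρ')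
  have hsym : ∀ x y : H, ⟪P x, y⟫ = ⟪x, P y⟫ := fun x y => hPsa.isSymmetric x y
  have hTsym : ∀ x y : H, ⟪T x, y⟫ = ⟪x, T y⟫ := fun x y => hTsa.isSymmetric x y
  have hTT : ∀ x, T (T x) = T x := fun x => by
    conv_rhs => rw [← hT]
    rfl
  have hcomm' : ∀ x, T (P x) = P (T x) := fun x => by
    have := ContinuousLinearMap.ext_iff.mp hcomm x
    simpa using this
  -- T gn = gn
  have hgn1 : gn = T f + T (P gn) := by rw [← hgneq]; abel
  have hTgn : T gn = gn := by
    conv_lhs => rw [hgn1]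
    rw [map_add, hTT, hTT, ← hgn1]
  have hTPgn : T (P gn) = P gn := by rw [hcomm', hTgn]
  have hgn2 : gn - P gn = T f := by rw [← hTPgn]; exact hgneq
  -- identity for σ²
  have hA : ⟪f, f⟫ + 2 * ⟪P f, g⟫ = ⟪f, g + P g⟫ := by
    have h1 : ⟪f, f⟫ = ⟪f, g⟫ - ⟪f, P g⟫ := by
      nth_rewrite 2 [← hgeq]; rw [inner_sub_right]
    rw [inner_add_right, hsym, h1]; ring
  -- identity for σₙ²
  have hB : ⟪T f, T f⟫ + 2 * ⟪T (P f), gn⟫ = ⟪T f, gn + P gn⟫ := by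
    have h1 : ⟪T (P f), gn⟫ = ⟪T f, P gn⟫ := by
      rw [hTsym, hTgn, hsym, hTsym f (P gn), hTPgn]
    have h2 : ⟪T f, T f⟫ = ⟪T f, gn⟫ - ⟪T f, P gn⟫ := by
      nth_rewrite 2 [← hgn2]; rw [inner_sub_right]
    rw [inner_add_right, h1, h2]; ring
  -- resolvent-type bound
  have hbound : ∀ x ∈ H₀, ∀ y : H, x - P x = y → ‖x‖ ≤ (1 - ρ)⁻¹ * ‖y‖ := by
    intro x hx y hxy
    have h1 : ‖x‖ - ‖P x‖ ≤ ‖y‖ := by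
      have := norm_sub_norm_le x (P x)
      rw [hxy] at this; linarith
    have hc := hcontr x hx
    have h2 : (1 - ρ) * ‖x‖ ≤ ‖y‖ := by nlinarith
    calc ‖x‖ = (1 - ρ)⁻¹ * ((1 - ρ) * ‖x‖) := by
            rw [← mul_assoc, mul_comm ((1-ρ)⁻¹), hmul, one_mul]
      _ ≤ (1 - ρ)⁻¹ * ‖y‖ := by
            exact mul_le_mul_of_nonneg_left h2 (le_of_lt hcinv)
  have hgnorm : ‖g‖ ≤ (1 - ρ)⁻¹ * ‖f‖ := hbound g hg f hgeq
  have hemem : g - gn ∈ H₀ := Submodule.sub_mem _ hg hgn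
  have heeq : (g - gn) - P (g - gn) = f - T f := by
    rw [map_sub, ← hgn2, ← hgeq]; abel
  have henorm : ‖g - gn‖ ≤ (1 - ρ)⁻¹ * ‖f - T f‖ := hbound _ hemem _ heeq
  -- ‖T f‖ ≤ ‖f‖
  have hTfnorm : ‖T f‖ ≤ ‖f‖ := by
    have h1 : ⟪T f, T f⟫ = ⟪f, T f⟫ := by rw [hTsym, hTT]
    have h2 : ‖T f‖ * ‖T f‖ ≤ ‖f‖ * ‖T f‖ := by
      rw [← real_inner_self_eq_norm_mul_norm, h1]
      exact real_inner_le_norm f (T f)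
    rcases eq_or_lt_of_le (norm_nonneg (T f)) with h | h
    · rw [← h]; exact norm_nonneg f
    · exact le_of_mul_le_mul_right h2 h
  -- norms of x + P x for x ∈ H₀
  have hplus : ∀ x ∈ H₀, ‖x + P x‖ ≤ (1 + ρ) * ‖x‖ := by
    intro x hx
    have := norm_add_le x (P x)
    have hc := hcontr x hx
    nlinarith
  have hgplus : ‖g + P g‖ ≤ (1 + ρ) * ((1 - ρ)⁻¹ * ‖f‖) := by
    have := hplus g hg
    nlinarith
  have heplus : ‖(g - gn) + P (g - gn)‖ ≤ (1 + ρ) * ((1 - ρ)⁻¹ * ‖f - T f‖) := by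
    have := hplus _ hemem
    nlinarith
  -- decomposition of the difference
  have key : (⟪f, f⟫ + 2 * ⟪P f, g⟫) - (⟪T f, T f⟫ + 2 * ⟪T (P f), gn⟫)
      = ⟪f - T f, g + P g⟫ + ⟪T f, (g - gn) + P (g - gn)⟫ := by
    rw [hA, hB, inner_sub_left, map_sub]
    have : gn + P gn = (g + P g) - ((g - gn) + (P g - P gn)) := by abel
    rw [this, inner_sub_right]
    ring
  rw [key]
  have hb1 : |⟪f - T f, g + P g⟫| ≤ ‖f - T f‖ * ‖g + P g‖ :=
    abs_real_inner_le_norm _ _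
  have hb2 : |⟪T f, (g - gn) + P (g - gn)⟫| ≤ ‖T f‖ * ‖(g - gn) + P (g - gn)‖ :=
    abs_real_inner_le_norm _ _
  have habs := abs_add_le (⟪f - T f, g + P g⟫) (⟪T f, (g - gn) + P (g - gn)⟫)
  have hone : (1 + ρ) ≤ (1 - ρ)⁻¹ := by nlinarith [sq_nonneg ρ]
  have hfnn : (0:ℝ) ≤ ‖f‖ := norm_nonneg f
  have hdnn : (0:ℝ) ≤ ‖f - T f‖ := norm_nonneg _
  have hTfnn : (0:ℝ) ≤ ‖T f‖ := norm_nonneg _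
  have hgpnn : (0:ℝ) ≤ ‖g + P g‖ := norm_nonneg _
  have hepnn : (0:ℝ) ≤ ‖(g - gn) + P (g - gn)‖ := norm_nonneg _
  have step1 : ‖f - T f‖ * ‖g + P g‖ ≤ ‖f - T f‖ * ((1 + ρ) * ((1 - ρ)⁻¹ * ‖f‖)) :=
    mul_le_mul_of_nonneg_left hgplus hdnn
  have step2 : ‖T f‖ * ‖(g - gn) + P (g - gn)‖ ≤ ‖f‖ * ((1 + ρ) * ((1 - ρ)⁻¹ * ‖f - T f‖)) :=
    mul_le_mul hTfnorm heplus hepnn hfnn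
  have step3 : ‖f - T f‖ * ((1 + ρ) * ((1 - ρ)⁻¹ * ‖f‖))
      ≤ ‖f - T f‖ * ((1 - ρ)⁻¹ * ((1 - ρ)⁻¹ * ‖f‖)) := by
    have : (1 + ρ) * ((1 - ρ)⁻¹ * ‖f‖) ≤ (1 - ρ)⁻¹ * ((1 - ρ)⁻¹ * ‖f‖) :=
      mul_le_mul_of_nonneg_right hone (by positivity)
    exact mul_le_mul_of_nonneg_left this hdnn
  have step4 : ‖f‖ * ((1 + ρ) * ((1 - ρ)⁻¹ * ‖f - T f‖))
      ≤ ‖f‖ * ((1 - ρ)⁻¹ * ((1 - ρ)⁻¹ * ‖f - T f‖)) := by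
    have : (1 + ρ) * ((1 - ρ)⁻¹ * ‖f - T f‖) ≤ (1 - ρ)⁻¹ * ((1 - ρ)⁻¹ * ‖f - T f‖) :=
      mul_le_mul_of_nonneg_right hone (by positivity)
    exact mul_le_mul_of_nonneg_left this hfnn
  calc |⟪f - T f, g + P g⟫ + ⟪T f, (g - gn) + P (g - gn)⟫|
      ≤ |⟪f - T f, g + P g⟫| + |⟪T f, (g - gn) + P (g - gn)⟫| := habs
    _ ≤ ‖f - T f‖ * ‖g + P g‖ + ‖T f‖ * ‖(g - gn) + P (g - gn)‖ := add_le_add hb1 hb2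
    _ ≤ 2 * ‖f‖ * (1 - ρ)⁻¹ ^ 2 * ‖f - T f‖ := by
        have h := add_le_add (le_trans step1 step3) (le_trans step2 step4)
        have hring : ‖f - T f‖ * ((1 - ρ)⁻¹ * ((1 - ρ)⁻¹ * ‖f‖))
            + ‖f‖ * ((1 - ρ)⁻¹ * ((1 - ρ)⁻¹ * ‖f - T f‖))
            = 2 * ‖f‖ * (1 - ρ)⁻¹ ^ 2 * ‖f - T f‖ := by ring
        linarith [h]
end
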